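/- arXiv:math/0204272 — 5 statements merged into one kernel-verified Lean document; each statement's English description precedes it below -/
import Mathlib

section
/- Let P be a real hyperbolic polynomial of degree n ≥ s + 1 with real roots x_1 ≤ … ≤ x_n (with multiplicity), and let ξ_1 ≤ … ≤ ξ_{n-s} be the roots (with multiplicity) of the s-th derivative P^(s). Then for every l with 1 ≤ l ≤ n - s one has x_l ≤ ξ_l ≤ x_{l+s}. -/
open Polynomial

private lemma sum_count_le_card (U : Finset ℝ) (M : Multiset ℝ) :
    (∑ x ∈ U, M.count x) ≤ Multiset.card M := by
  classical
  calc ∑ x ∈ U, M.count x ≤ ∑ x ∈ U ∪ M.toFinset, M.count x :=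
        Finset.sum_le_sum_of_subset Finset.subset_union_left
    _ = ∑ x ∈ M.toFinset, M.count x :=
        (Finset.sum_subset Finset.subset_union_right (fun x _ hx =>
          Multiset.count_eq_zero_of_notMem (by simpa using hx))).symm
    _ = Multiset.card M := M.toFinset_sum_count_eq

private lemma filter_card_eq_sum (M : Multiset ℝ) (q : ℝ → Prop) [DecidablePred q] :
    (M.filter q).card = ∑ x ∈ M.toFinset.filter q, M.count x := by
  classical
  rw [← (M.filter q).toFinset_sum_count_eq, Multiset.toFinset_filter]
  refine Finset.sum_congr rfl fun x hx => ?_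
  rw [Multiset.count_filter, if_pos (Finset.mem_filter.1 hx).2]

/-- Localized Rolle count: for any "convex" predicate `q`, the number of roots of `p`
satisfying `q` is at most one more than that of `derivative p`. -/
private lemma rolle_filter (p : ℝ[X]) (q : ℝ → Prop) [DecidablePred q]
    (hq : ∀ ⦃x y z : ℝ⦄, q x → q y → x < z → z < y → q z) :
    (p.roots.filter q).card ≤ ((derivative p).roots.filter q).card + 1 := by
  classical
  rcases eq_or_ne (derivative p) 0 with hp' | hp'
  · rw [eq_C_of_derivative_eq_zero hp', roots_C]
    simp
  have hp : p ≠ 0 := ne_of_apply_ne derivative (by rwa [derivative_zero])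
  set S : Finset ℝ := p.roots.toFinset.filter q with hS
  set T : Finset ℝ := (derivative p).roots.toFinset.filter q with hT
  have hcard : S.card ≤ (T \ S).card + 1 := by
    refine Finset.card_le_diff_of_interleaved fun x hx y hy hxy _ => ?_
    rw [hS, Finset.mem_filter, Multiset.mem_toFinset, mem_roots hp] at hx hy
    obtain ⟨z, hz1, hz2⟩ := exists_deriv_eq_zero hxy p.continuousOn (hx.1.trans hy.1.symm)
    refine ⟨z, ?_, hz1⟩
    rw [hT, Finset.mem_filter, Multiset.mem_toFinset, mem_roots hp']
    exact ⟨by rwa [IsRoot, ← p.deriv], hq hx.2 hy.2 hz1.1 hz1.2⟩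
  have hq_mem : ∀ x ∈ S ∪ (T \ S), q x := by
    intro x hx
    rcases Finset.mem_union.1 hx with h | h
    · exact (Finset.mem_filter.1 h).2
    · exact (Finset.mem_filter.1 (Finset.mem_sdiff.1 h).1).2
  calc (p.roots.filter q).card = ∑ x ∈ S, p.roots.count x := filter_card_eq_sum p.roots q
    _ = ∑ x ∈ S, ((p.roots.count x - 1) + 1) := by
        refine Finset.sum_congr rfl fun x hx => (tsub_add_cancel_of_le ?_).symm
        exact Nat.succ_le_iff.2 (Multiset.count_pos.2
          (Multiset.mem_toFinset.1 (Finset.mem_filter.1 hx).1))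
    _ = (∑ x ∈ S, (p.rootMultiplicity x - 1)) + S.card := by
        simp only [Finset.sum_add_distrib, Finset.card_eq_sum_ones, count_roots]
    _ ≤ (∑ x ∈ S, (derivative p).roots.count x) + ((T \ S).card + 1) := by
        refine add_le_add (Finset.sum_le_sum fun x _ => ?_) hcard
        rw [count_roots]
        exact rootMultiplicity_sub_one_le_derivative_rootMultiplicity _ _
    _ ≤ (∑ x ∈ S, (derivative p).roots.count x) +
          ((∑ x ∈ T \ S, (derivative p).roots.count x) + 1) := by
        refine Nat.add_le_add_left (Nat.add_le_add_right ((Finset.card_eq_sum_ones _).trans_le ?_) _) _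
        refine Finset.sum_le_sum fun x hx => Nat.succ_le_iff.2 ?_
        rw [Multiset.count_pos, ← Multiset.mem_toFinset]
        exact (Finset.mem_filter.1 (Finset.mem_sdiff.1 hx).1).1
    _ = (∑ x ∈ S ∪ (T \ S), (derivative p).roots.count x) + 1 := by
        rw [Finset.sum_union Finset.disjoint_sdiff, add_assoc]
    _ = (∑ x ∈ S ∪ (T \ S), ((derivative p).roots.filter q).count x) + 1 := by
        refine congrArg (· + 1) (Finset.sum_congr rfl fun x hx => ?_)
        rw [Multiset.count_filter, if_pos (hq_mem x hx)]
    _ ≤ ((derivative p).roots.filter q).card + 1 :=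
        Nat.add_le_add_right (sum_count_le_card _ _) 1

/-- The counting function: number of roots of `p` that are `≤ t`, with multiplicity. -/
private noncomputable def cnt (p : ℝ[X]) (t : ℝ) : ℕ := (p.roots.filter (fun a => a ≤ t)).card

private lemma cnt_total (p : ℝ[X]) (t : ℝ) :
    cnt p t + (p.roots.filter (fun a => t < a)).card = p.roots.card := by
  classical
  have : (p.roots.filter (fun a => t < a)) = (p.roots.filter (fun a => ¬ a ≤ t)) :=
    Multiset.filter_congr fun x _ => by simp [not_le]
  rw [cnt, this, ← Multiset.card_add, Multiset.filter_add_not]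

private lemma step (p : ℝ[X]) (m : ℕ) (hm : 1 ≤ m)
    (hdeg : p.natDegree = m) (hcard : p.roots.card = m) :
    derivative p ≠ 0 ∧ (derivative p).natDegree = m - 1 ∧
      (derivative p).roots.card = m - 1 ∧
      ∀ t, cnt (derivative p) t ≤ cnt p t ∧ cnt p t ≤ cnt (derivative p) t + 1 := by
  classical
  have hne : derivative p ≠ 0 := by
    intro h
    have := eq_C_of_derivative_eq_zero h
    rw [this, natDegree_C] at hdeg; omega
  have h1 : Multiset.card p.roots ≤ Multiset.card (derivative p).roots + 1 :=
    p.card_roots_le_derivative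
  have h2 : Multiset.card (derivative p).roots ≤ (derivative p).natDegree :=
    (derivative p).card_roots'
  have h3 : (derivative p).natDegree ≤ m - 1 := hdeg ▸ p.natDegree_derivative_le
  refine ⟨hne, by omega, by omega, fun t => ?_⟩
  have hA := cnt_total p t
  have hB := cnt_total (derivative p) t
  have L1 : cnt p t ≤ cnt (derivative p) t + 1 :=
    rolle_filter p (fun a => a ≤ t) (fun x y z _ hy _ hzy => hzy.le.trans hy)
  have L2 : (p.roots.filter (fun a => t < a)).card ≤
      ((derivative p).roots.filter (fun a => t < a)).card + 1 :=
    rolle_filter p (fun a => t < a) (fun x y z hx _ hxz _ => hx.trans hxz)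
  omega

private lemma iterate_facts (p : ℝ[X]) (n : ℕ)
    (hdeg : p.natDegree = n) (hcard : p.roots.card = n) :
    ∀ k, k ≤ n → (derivative^[k] p).natDegree = n - k ∧
      (derivative^[k] p).roots.card = n - k ∧
      ∀ t, cnt (derivative^[k] p) t ≤ cnt p t ∧ cnt p t ≤ cnt (derivative^[k] p) t + k := by
  intro k
  induction k with
  | zero =>
    intro _
    simp only [Function.iterate_zero_apply, Nat.sub_zero]
    exact ⟨hdeg, hcard, fun t => ⟨le_rfl, le_rfl⟩⟩
  | succ k ih =>
    intro hk
    obtain ⟨hd, hc, hcnt⟩ := ih (by omega)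
    obtain ⟨_, hd', hc', hcnt'⟩ := step (derivative^[k] p) (n - k) (by omega) hd hc
    have hE : derivative^[k + 1] p = derivative (derivative^[k] p) :=
      Function.iterate_succ_apply' derivative k p
    rw [hE]
    refine ⟨by rw [hd']; omega, by rw [hc']; omega, fun t => ?_⟩
    have h1 := hcnt t; have h2 := hcnt' t
    omega

private lemma sorted_getElem_le_iff {L : List ℝ} (hL : L.Pairwise (· ≤ ·)) {l : ℕ}
    (hl : l < L.length) (t : ℝ) :
    L[l] ≤ t ↔ l + 1 ≤ (L.filter (fun a => a ≤ t)).length := by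
  constructor
  · intro h
    have hsub : (L.take (l + 1)).Sublist L := List.take_sublist _ _
    have hall : ∀ x ∈ L.take (l + 1), (fun a => decide (a ≤ t)) x = true := by
      intro x hx
      obtain ⟨i, hi, rfl⟩ := List.mem_iff_getElem.1 hx
      have hi' : i < l + 1 := lt_of_lt_of_le hi (by simp)
      rw [List.getElem_take]
      simp only [decide_eq_true_eq]
      rcases eq_or_lt_of_le (Nat.lt_succ_iff.1 hi') with h' | h'
      · exact h' ▸ h
      · exact le_trans (List.pairwise_iff_getElem.1 hL i l
          (by omega) hl h') h
    have h1 : ((L.take (l + 1)).filter (fun a => a ≤ t)).length = l + 1 := by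
      rw [List.filter_eq_self.2 hall, List.length_take]
      omega
    calc l + 1 = ((L.take (l + 1)).filter (fun a => a ≤ t)).length := h1.symm
      _ = (L.take (l + 1)).countP (fun a => a ≤ t) :=
          List.countP_eq_length_filter.symm
      _ ≤ L.countP (fun a => a ≤ t) := hsub.countP_le
      _ = (L.filter (fun a => a ≤ t)).length := List.countP_eq_length_filter
  · intro h
    by_contra hlt
    push_neg at hlt
    have hdrop : ∀ x ∈ L.drop l, ¬ ((fun a => decide (a ≤ t)) x = true) := by
      intro x hx
      obtain ⟨i, hi, rfl⟩ := List.mem_iff_getElem.1 hx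
      rw [List.getElem_drop]
      simp only [decide_eq_true_eq, not_le]
      rcases Nat.eq_zero_or_pos i with h' | h'
      · simpa [h'] using hlt
      · have hi' : i < L.length - l := by simpa using hi
        exact lt_of_lt_of_le hlt (List.pairwise_iff_getElem.1 hL l (l + i) hl
          (by omega) (by omega))
    have hthis := congrArg (fun l => (List.filter (fun a => decide (a ≤ t)) l).length)
      (List.take_append_drop l L)
    simp only [List.filter_append, List.length_append] at hthis
    have hnil : (L.drop l).filter (fun a => decide (a ≤ t)) = [] :=
      List.filter_eq_nil_iff.2 (by simpa using hdrop)
    rw [hnil] at hthis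
    have h2 : ((L.take l).filter (fun a => a ≤ t)).length ≤ l :=
      le_trans (List.length_filter_le _ _) (by simp)
    simp only [List.length_nil, add_zero] at hthis
    omega

private lemma cnt_eq_filter_sort (M : Multiset ℝ) (t : ℝ) :
    (M.filter (fun a => a ≤ t)).card = ((M.sort (· ≤ ·)).filter (fun a => a ≤ t)).length := by
  classical
  conv_lhs => rw [← Multiset.sort_eq M (· ≤ ·)]
  rw [Multiset.filter_coe, Multiset.coe_card]

theorem rolle_interlacing_of_hyperbolic
    (P : ℝ[X]) (n s : ℕ) (hs : 1 ≤ s) (hn : s + 1 ≤ n)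
    (hmonic : P.Monic) (hdeg : P.natDegree = n)
    (hhyp : P.roots.card = n)
    (xs ξs : List ℝ)
    (hxs : xs = P.roots.sort (· ≤ ·))
    (hξs : ξs = (derivative^[s] P).roots.sort (· ≤ ·))
    (hξlen : ξs.length = n - s) :
    ∀ l, l < n - s → xs[l]! ≤ ξs[l]! ∧ ξs[l]! ≤ xs[l + s]! := by
  classical
  obtain ⟨hdQ, hcQ, hcnt⟩ := iterate_facts P n hdeg hhyp s (by omega)
  set Q := derivative^[s] P with hQ
  have hxs_len : xs.length = n := by rw [hxs, Multiset.length_sort, hhyp]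
  have hxs_sorted : xs.Pairwise (· ≤ ·) := hxs ▸ Multiset.pairwise_sort _ _
  have hξs_sorted : ξs.Pairwise (· ≤ ·) := hξs ▸ Multiset.pairwise_sort _ _
  have hcntP : ∀ t, cnt P t = (xs.filter (fun a => a ≤ t)).length := by
    intro t; rw [hxs]; exact cnt_eq_filter_sort P.roots t
  have hcntQ : ∀ t, cnt Q t = (ξs.filter (fun a => a ≤ t)).length := by
    intro t; rw [hξs]; exact cnt_eq_filter_sort Q.roots t
  intro l hl
  have hlx : l < xs.length := by omega
  have hlsx : l + s < xs.length := by omega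
  have hlξ : l < ξs.length := by omega
  rw [getElem!_pos xs l hlx, getElem!_pos xs (l + s) hlsx, getElem!_pos ξs l hlξ]
  constructor
  · -- xs[l] ≤ ξs[l]
    have h1 : l + 1 ≤ (ξs.filter (fun a => a ≤ ξs[l])).length :=
      (sorted_getElem_le_iff hξs_sorted hlξ _).1 le_rfl
    have h2 : cnt Q ξs[l] ≤ cnt P ξs[l] := (hcnt ξs[l]).1
    rw [sorted_getElem_le_iff hxs_sorted hlx]
    rw [hcntQ, hcntP] at h2
    omega
  · -- ξs[l] ≤ xs[l+s]
    have h1 : l + s + 1 ≤ (xs.filter (fun a => a ≤ xs[l + s])).length :=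
      (sorted_getElem_le_iff hxs_sorted hlsx _).1 le_rfl
    have h2 : cnt P xs[l + s] ≤ cnt Q xs[l + s] + s := (hcnt xs[l + s]).2
    rw [sorted_getElem_le_iff hξs_sorted hlξ]
    rw [hcntQ, hcntP] at h2
    omega
end

section
/- Let P be a real hyperbolic polynomial of degree n with sorted roots x_1 ≤ … ≤ x_n and let ξ_1 ≤ … ≤ ξ_{n-s} be the sorted roots of P^(s). If for some l one has x_l = ξ_l, then x_l = x_{l+1} = … = x_{l+s} = ξ_l; similarly, if x_{l+s} = ξ_l, then x_l = x_{l+1} = … = x_{l+s} = ξ_l. -/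
open Polynomial

namespace EqPropAux


theorem rolle_count (p : ℝ[X]) (hp : p ≠ 0) (pred : ℝ → Prop) [DecidablePred pred]
    (hconv : ∀ ⦃a b z : ℝ⦄, pred a → pred b → a < z → z < b → pred z) :
    Multiset.card (p.roots.filter pred) ≤
      Multiset.card ((derivative p).roots.filter pred) + 1 := by
  set A : Multiset ℝ := p.roots.filter pred with hA
  set B : Multiset ℝ := (derivative p).roots.filter pred with hB
  have key : A.toFinset.card ≤ (B.toFinset \ A.toFinset).card + 1 := by
    rcases eq_or_ne (derivative p) 0 with hp' | hp'
    · rw [eq_C_of_derivative_eq_zero hp'] at hA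
      rw [hA]
      simp
    refine Finset.card_le_diff_of_interleaved fun x hx y hy hxy _ => ?_
    rw [Multiset.mem_toFinset, hA, Multiset.mem_filter, mem_roots hp] at hx hy
    obtain ⟨z, hz1, hz2⟩ := exists_deriv_eq_zero hxy p.continuousOn (hx.1.trans hy.1.symm)
    refine ⟨z, ?_, hz1⟩
    rw [Multiset.mem_toFinset, hB, Multiset.mem_filter, mem_roots hp']
    exact ⟨by rwa [IsRoot, ← p.deriv], hconv hx.2 hy.2 hz1.1 hz1.2⟩
  have hcountA : ∀ x ∈ A.toFinset, A.count x = p.rootMultiplicity x := by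
    intro x hx
    rw [Multiset.mem_toFinset, hA, Multiset.mem_filter] at hx
    rw [hA, Multiset.count_filter_of_pos hx.2, count_roots]
  have hcountB : ∀ x, pred x → B.count x = (derivative p).rootMultiplicity x := by
    intro x hx
    rw [hB, Multiset.count_filter_of_pos hx, count_roots]
  have hApred : ∀ x ∈ A.toFinset, pred x := by
    intro x hx
    rw [Multiset.mem_toFinset, hA, Multiset.mem_filter] at hx
    exact hx.2
  calc Multiset.card A = ∑ x ∈ A.toFinset, A.count x := (Multiset.toFinset_sum_count_eq _).symm
    _ = ∑ x ∈ A.toFinset, (A.count x - 1 + 1) := by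
        refine Finset.sum_congr rfl fun x hx => (tsub_add_cancel_of_le ?_).symm
        exact Nat.succ_le_iff.2 (Multiset.count_pos.2 (Multiset.mem_toFinset.1 hx))
    _ = (∑ x ∈ A.toFinset, (A.count x - 1)) + A.toFinset.card := by
        rw [Finset.sum_add_distrib, Finset.card_eq_sum_ones]
    _ ≤ (∑ x ∈ A.toFinset, B.count x) + ((B.toFinset \ A.toFinset).card + 1) := by
        refine add_le_add (Finset.sum_le_sum fun x hx => ?_) key
        rw [hcountA x hx, hcountB x (hApred x hx)]
        exact rootMultiplicity_sub_one_le_derivative_rootMultiplicity _ _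
    _ ≤ (∑ x ∈ A.toFinset, B.count x) +
          ((∑ x ∈ B.toFinset \ A.toFinset, B.count x) + 1) := by
        refine add_le_add_right (add_le_add_left ((Finset.card_eq_sum_ones _).trans_le ?_) _) _
        refine Finset.sum_le_sum fun x hx => Nat.succ_le_iff.2 ?_
        rw [Multiset.count_pos, ← Multiset.mem_toFinset]
        exact (Finset.mem_sdiff.1 hx).1
    _ = Multiset.card B + 1 := by
        rw [← add_assoc, ← Finset.sum_union Finset.disjoint_sdiff,
          Finset.union_sdiff_self_eq_union, ← Multiset.toFinset_sum_count_eq,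
          ← Finset.sum_subset Finset.subset_union_right]
        intro x _ hx₂
        simpa only [Multiset.mem_toFinset, Multiset.count_eq_zero] using hx₂


noncomputable def Lc (q : ℝ[X]) (t : ℝ) : ℕ := Multiset.card (q.roots.filter (· < t))
noncomputable def Gc (q : ℝ[X]) (t : ℝ) : ℕ := Multiset.card (q.roots.filter (· ≤ t))

theorem gc_eq (q : ℝ[X]) (t : ℝ) : Gc q t = Lc q t + q.rootMultiplicity t := by
  have h1 : (q.roots.filter (· ≤ t)).filter (· < t) + (q.roots.filter (· ≤ t)).filter (fun a => ¬ a < t)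
      = q.roots.filter (· ≤ t) := Multiset.filter_add_not _ _
  have h2 : (q.roots.filter (· ≤ t)).filter (· < t) = q.roots.filter (· < t) := by
    rw [Multiset.filter_filter]
    exact Multiset.filter_congr (fun x _ => by constructor <;> intro h <;> [exact h.1; exact ⟨h, h.le⟩])
  have h3 : (q.roots.filter (· ≤ t)).filter (fun a => ¬ a < t) = q.roots.filter (t = ·) := by
    rw [Multiset.filter_filter]
    refine Multiset.filter_congr (fun x _ => ?_)
    constructor
    · rintro ⟨h, h'⟩; exact (le_antisymm h' (not_lt.1 h)).symm
    · rintro rfl; exact ⟨lt_irrefl _, le_refl _⟩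
  have := congrArg Multiset.card h1
  rw [Multiset.card_add, h2, h3] at this
  rw [Gc, Lc, ← this, ← Multiset.count_eq_card_filter_eq, count_roots]

structure Hyp (p : ℝ[X]) : Prop where
  ne : p ≠ 0
  card : Multiset.card p.roots = p.natDegree

theorem hyp_deriv {p : ℝ[X]} (h : Hyp p) (h1 : 1 ≤ p.natDegree) :
    Hyp (derivative p) ∧ (derivative p).natDegree = p.natDegree - 1 := by
  have hd0 : derivative p ≠ 0 := by
    intro hz
    have := eq_C_of_derivative_eq_zero hz
    rw [this, natDegree_C] at h1
    omega
  have hdeg : (derivative p).natDegree = p.natDegree - 1 := by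
    have := degree_derivative_eq p (by omega)
    exact natDegree_eq_of_degree_eq_some this
  have hge : p.natDegree - 1 ≤ Multiset.card (derivative p).roots := by
    have := p.card_roots_le_derivative
    rw [h.card] at this
    omega
  have hle : Multiset.card (derivative p).roots ≤ p.natDegree - 1 := by
    have := (derivative p).card_roots'
    omega
  exact ⟨⟨hd0, by omega⟩, hdeg⟩

theorem step_L_ge1 {p : ℝ[X]} (hp : p ≠ 0) (t : ℝ) : Lc p t ≤ Lc (derivative p) t + 1 :=
  rolle_count p hp (· < t) (fun _ b z _ hb _ hzb => hzb.trans hb)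

theorem step_G_ge1 {p : ℝ[X]} (hp : p ≠ 0) (t : ℝ) : Gc p t ≤ Gc (derivative p) t + 1 :=
  rolle_count p hp (· ≤ t) (fun _ b z _ hb _ hzb => (hzb.trans_le hb).le)

theorem mult_pos_of_counts {p : ℝ[X]} (hp : p ≠ 0) {t : ℝ} (h : Lc p t < Gc p t) :
    p.IsRoot t := by
  have := gc_eq p t
  have hm : 0 < p.rootMultiplicity t := by omega
  exact (rootMultiplicity_pos hp).1 hm

theorem step_L_root {p : ℝ[X]} (hp : p ≠ 0) {t : ℝ} (hr : p.IsRoot t) :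
    Lc p t ≤ Lc (derivative p) t := by
  have h1 := step_G_ge1 hp t
  have h2 := gc_eq p t
  have h3 := gc_eq (derivative p) t
  have h4 : (derivative p).rootMultiplicity t = p.rootMultiplicity t - 1 :=
    derivative_rootMultiplicity_of_root hr
  have h5 : 0 < p.rootMultiplicity t := (rootMultiplicity_pos hp).2 hr
  omega

theorem step_L_le {p : ℝ[X]} (h : Hyp p) (h1 : 1 ≤ p.natDegree) (t : ℝ) :
    Lc (derivative p) t ≤ Lc p t := by
  obtain ⟨hd, hdeg⟩ := hyp_deriv h h1
  have hsplit : ∀ q : ℝ[X], Lc q t + Multiset.card (q.roots.filter (fun a => t ≤ a))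
      = Multiset.card q.roots := by
    intro q
    have := congrArg Multiset.card (Multiset.filter_add_not (· < t) q.roots)
    rw [Multiset.card_add] at this
    rw [Lc, ← this]
    congr 1
    exact congrArg Multiset.card (Multiset.filter_congr (fun x _ => not_lt.symm))
  have hro : Multiset.card (p.roots.filter (fun a => t ≤ a)) ≤
      Multiset.card ((derivative p).roots.filter (fun a => t ≤ a)) + 1 :=
    rolle_count p h.ne _ (fun a _ z ha _ haz _ => ha.trans haz.le)
  have e1 := hsplit p
  have e2 := hsplit (derivative p)
  rw [h.card] at e1
  rw [hd.card, hdeg] at e2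
  omega

theorem step_G_le {p : ℝ[X]} (h : Hyp p) (h1 : 1 ≤ p.natDegree) (t : ℝ) :
    Gc (derivative p) t ≤ Gc p t := by
  obtain ⟨hd, hdeg⟩ := hyp_deriv h h1
  have hsplit : ∀ q : ℝ[X], Gc q t + Multiset.card (q.roots.filter (fun a => t < a))
      = Multiset.card q.roots := by
    intro q
    have := congrArg Multiset.card (Multiset.filter_add_not (· ≤ t) q.roots)
    rw [Multiset.card_add] at this
    rw [Gc, ← this]
    congr 1
    exact congrArg Multiset.card (Multiset.filter_congr (fun x _ => not_le.symm))
  have hro : Multiset.card (p.roots.filter (fun a => t < a)) ≤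
      Multiset.card ((derivative p).roots.filter (fun a => t < a)) + 1 :=
    rolle_count p h.ne _ (fun a _ z ha _ haz _ => ha.trans haz)
  have e1 := hsplit p
  have e2 := hsplit (derivative p)
  rw [h.card] at e1
  rw [hd.card, hdeg] at e2
  omega




theorem iter_hyp (s : ℕ) : ∀ p : ℝ[X], Hyp p → s ≤ p.natDegree →
    Hyp (derivative^[s] p) ∧ (derivative^[s] p).natDegree = p.natDegree - s := by
  induction s with
  | zero => intro p hp _; simpa using hp
  | succ s ih =>
    intro p hp hs
    obtain ⟨hd, hdeg⟩ := hyp_deriv hp (by omega)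
    rw [Function.iterate_succ_apply]
    obtain ⟨h1, h2⟩ := ih (derivative p) hd (by omega)
    exact ⟨h1, by omega⟩

theorem chain_G_le (s : ℕ) : ∀ p : ℝ[X], Hyp p → s ≤ p.natDegree → ∀ t,
    Gc (derivative^[s] p) t ≤ Gc p t := by
  induction s with
  | zero => intro p _ _ t; simp
  | succ s ih =>
    intro p hp hs t
    obtain ⟨hd, hdeg⟩ := hyp_deriv hp (by omega)
    rw [Function.iterate_succ_apply]
    exact (ih (derivative p) hd (by omega) t).trans (step_G_le hp (by omega) t)

theorem chain_L_ge (s : ℕ) : ∀ p : ℝ[X], Hyp p → s ≤ p.natDegree → ∀ t,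
    Lc p t ≤ Lc (derivative^[s] p) t + s := by
  induction s with
  | zero => intro p _ _ t; simp
  | succ s ih =>
    intro p hp hs t
    obtain ⟨hd, hdeg⟩ := hyp_deriv hp (by omega)
    rw [Function.iterate_succ_apply]
    have := ih (derivative p) hd (by omega) t
    have := step_L_ge1 hp.ne t
    omega

theorem C1 (s : ℕ) : ∀ p : ℝ[X], Hyp p → s ≤ p.natDegree → ∀ (t : ℝ) (l : ℕ),
    Lc (derivative^[s] p) t ≤ l → l + 1 ≤ Gc (derivative^[s] p) t →
    Lc p t ≤ l → l + 1 ≤ Gc p t → l + s + 1 ≤ Gc p t := by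
  induction s with
  | zero => intro p _ _ t l _ _ _ h; omega
  | succ s ih =>
    intro p hp hs t l hL hG hLp hGp
    obtain ⟨hd, hdeg⟩ := hyp_deriv hp (by omega)
    rw [Function.iterate_succ_apply] at hL hG
    have hroot : p.IsRoot t := mult_pos_of_counts hp.ne (by omega)
    have hmul : (derivative p).rootMultiplicity t = p.rootMultiplicity t - 1 :=
      derivative_rootMultiplicity_of_root hroot
    have hmpos : 0 < p.rootMultiplicity t := (rootMultiplicity_pos hp.ne).2 hroot
    have hLQ : Lc (derivative p) t ≤ l := (step_L_le hp (by omega) t).trans hLp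
    have hGQ : l + 1 ≤ Gc (derivative p) t :=
      hG.trans (chain_G_le s (derivative p) hd (by omega) t)
    have hIH := ih (derivative p) hd (by omega) t l hL hG hLQ hGQ
    have e1 := gc_eq p t
    have e2 := gc_eq (derivative p) t
    have := step_L_le hp (by omega) t
    omega

theorem C2 (s : ℕ) : ∀ p : ℝ[X], Hyp p → s ≤ p.natDegree → ∀ (t : ℝ) (l : ℕ),
    Lc (derivative^[s] p) t ≤ l → l + 1 ≤ Gc (derivative^[s] p) t →
    Lc p t ≤ l + s → l + s + 1 ≤ Gc p t → Lc p t ≤ l := by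
  induction s with
  | zero => intro p _ _ t l _ _ h _; omega
  | succ s ih =>
    intro p hp hs t l hL hG hLp hGp
    obtain ⟨hd, hdeg⟩ := hyp_deriv hp (by omega)
    rw [Function.iterate_succ_apply] at hL hG
    have hroot : p.IsRoot t := mult_pos_of_counts hp.ne (by omega)
    have hmul : (derivative p).rootMultiplicity t = p.rootMultiplicity t - 1 :=
      derivative_rootMultiplicity_of_root hroot
    have hmpos : 0 < p.rootMultiplicity t := (rootMultiplicity_pos hp.ne).2 hroot
    have hLQroot : Lc p t ≤ Lc (derivative p) t := step_L_root hp.ne hroot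
    have hLQ : Lc (derivative p) t ≤ l + s := by
      have := chain_L_ge s (derivative p) hd (by omega) t
      omega
    have hGQ : l + s + 1 ≤ Gc (derivative p) t := by
      have e1 := gc_eq p t
      have e2 := gc_eq (derivative p) t
      omega
    have := ih (derivative p) hd (by omega) t l hL hG hLQ hGQ
    omega




theorem sorted_countP {a : List ℝ} (ha : a.Pairwise (· ≤ ·)) (pb : ℝ → Bool)
    (hdc : ∀ x y : ℝ, x ≤ y → pb y = true → pb x = true) {i : ℕ} (hi : i < a.length) :
    pb a[i] = true ↔ i < a.countP pb := by
  have hmono : ∀ j k (hj : j < a.length) (hk : k < a.length), j ≤ k → a[j] ≤ a[k] := by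
    intro j k hj hk hjk
    rcases eq_or_lt_of_le hjk with rfl | h
    · exact le_refl _
    · exact List.pairwise_iff_getElem.1 ha j k hj hk h
  constructor
  · intro hp
    have h1 : a.countP pb = (a.take (i+1)).countP pb + (a.drop (i+1)).countP pb := by
      rw [← List.countP_append, List.take_append_drop]
    have h2 : (a.take (i+1)).countP pb = (a.take (i+1)).length := by
      rw [List.countP_eq_length]
      intro x hx
      obtain ⟨j, hj, rfl⟩ := List.mem_iff_getElem.1 hx
      rw [List.getElem_take]
      have hjlen : j < a.length := by
        have := List.length_take (i := i+1) (l := a)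
        omega
      refine hdc _ _ (hmono j i hjlen hi ?_) hp
      have := List.length_take (i := i+1) (l := a)
      omega
    have h3 : (a.take (i+1)).length = i + 1 := by
      rw [List.length_take]; omega
    omega
  · intro hc
    by_contra hp
    have h0 : (a.drop i).countP pb = 0 := by
      rw [List.countP_eq_zero]
      intro x hx
      obtain ⟨j, hj, rfl⟩ := List.mem_iff_getElem.1 hx
      rw [List.getElem_drop]
      intro hpx
      have hlen : i + j < a.length := by
        have := List.length_drop (i := i) (l := a); omega
      exact hp (hdc _ _ (hmono i (i+j) hi hlen (by omega)) hpx)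
    have h1 : a.countP pb = (a.take i).countP pb + (a.drop i).countP pb := by
      rw [← List.countP_append, List.take_append_drop]
    have h2 : (a.take i).countP pb ≤ i := by
      have := List.countP_le_length (p := pb) (l := a.take i)
      have := List.length_take (i := i) (l := a)
      omega
    omega


theorem bridge (m : Multiset ℝ) (pred : ℝ → Prop) [DecidablePred pred] :
    (m.sort (· ≤ ·)).countP (fun x => decide (pred x)) = Multiset.card (m.filter pred) := by
  rw [← Multiset.countP_eq_card_filter]
  conv_rhs => rw [← Multiset.sort_eq m (· ≤ ·)]
  rfl

theorem counts_of_val {m : Multiset ℝ} {a : List ℝ} (hma : a = m.sort (· ≤ ·)) {i : ℕ}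
    (hi : i < a.length) {t : ℝ} (ht : a[i] = t) :
    Multiset.card (m.filter (· < t)) ≤ i ∧ i + 1 ≤ Multiset.card (m.filter (· ≤ t)) := by
  have hsort : a.Pairwise (· ≤ ·) := by rw [hma]; exact Multiset.pairwise_sort m _
  constructor
  · by_contra hcon
    have := (sorted_countP hsort (fun x => decide (x < t))
      (fun x y hxy hy => by simp only [decide_eq_true_eq] at *; exact lt_of_le_of_lt hxy hy) hi).2
      (by rw [hma, bridge m (· < t)]; omega)
    simp only [decide_eq_true_eq, ht] at this
    exact lt_irrefl t this
  · have := (sorted_countP hsort (fun x => decide (x ≤ t))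
      (fun x y hxy hy => by simp only [decide_eq_true_eq] at *; exact le_trans hxy hy) hi).1
      (by simp [ht])
    rw [hma, bridge m (· ≤ t)] at this
    omega

theorem val_of_counts {m : Multiset ℝ} {a : List ℝ} (hma : a = m.sort (· ≤ ·)) {i : ℕ}
    (hi : i < a.length) {t : ℝ} (h1 : Multiset.card (m.filter (· < t)) ≤ i)
    (h2 : i + 1 ≤ Multiset.card (m.filter (· ≤ t))) : a[i] = t := by
  have hsort : a.Pairwise (· ≤ ·) := by rw [hma]; exact Multiset.pairwise_sort m _
  have hle : a[i] ≤ t := by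
    have := (sorted_countP hsort (fun x => decide (x ≤ t))
      (fun x y hxy hy => by simp only [decide_eq_true_eq] at *; exact le_trans hxy hy) hi).2
      (by rw [hma, bridge m (· ≤ t)]; omega)
    simpa using this
  have hge : ¬ a[i] < t := by
    intro hlt
    have := (sorted_countP hsort (fun x => decide (x < t))
      (fun x y hxy hy => by simp only [decide_eq_true_eq] at *; exact lt_of_le_of_lt hxy hy) hi).1
      (by simpa using hlt)
    rw [hma, bridge m (· < t)] at this
    omega
  exact le_antisymm hle (not_lt.1 hge)


end EqPropAux

open EqPropAux in
theorem equality_propagation_in_arrangement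
    (P : ℝ[X]) (n s : ℕ) (hs : 1 ≤ s) (hn : s + 1 ≤ n)
    (hP : P ≠ 0) (hdeg : P.natDegree = n) (hhyp : P.roots.card = n)
    (xs ξs : List ℝ)
    (hxs : xs = P.roots.sort (· ≤ ·))
    (hξs : ξs = (derivative^[s] P).roots.sort (· ≤ ·))
    (hξlen : ξs.length = n - s)
    (l : ℕ) (hl : l < n - s) :
    (xs[l]! = ξs[l]! → ∀ j ≤ s, xs[l + j]! = ξs[l]!) ∧
    (xs[l + s]! = ξs[l]! → ∀ j ≤ s, xs[l + j]! = ξs[l]!) := by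
  have hPhyp : Hyp P := ⟨hP, by rw [hhyp, hdeg]⟩
  have hsdeg : s ≤ P.natDegree := by omega
  obtain ⟨hRhyp, hRdeg⟩ := iter_hyp s P hPhyp hsdeg
  have hxlen : xs.length = n := by rw [hxs, Multiset.length_sort, hhyp]
  have hlξ : l < ξs.length := by omega
  have hlx : ∀ j, j ≤ s → l + j < xs.length := by intro j hj; omega
  set t : ℝ := ξs[l]! with htdef
  have ht : ξs[l] = t := (getElem!_pos ξs l hlξ).symm
  obtain ⟨hLR, hGR⟩ := counts_of_val hξs hlξ ht
  have hLRc : Lc (derivative^[s] P) t ≤ l := hLR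
  have hGRc : l + 1 ≤ Gc (derivative^[s] P) t := hGR
  have final : Lc P t ≤ l → l + s + 1 ≤ Gc P t → ∀ j ≤ s, xs[l + j]! = ξs[l]! := by
    intro hLle hGge j hj
    rw [getElem!_pos xs (l + j) (hlx j hj), ← htdef]
    exact val_of_counts hxs (hlx j hj)
      (le_trans hLle (by omega)) (le_trans (by omega) hGge)
  constructor
  · intro h1
    have h1' : xs[l] = t := by rw [getElem!_pos xs l (by omega)] at h1; exact h1
    obtain ⟨hLP, hGP⟩ := counts_of_val hxs (by omega : l < xs.length) h1'
    exact final hLP (C1 s P hPhyp hsdeg t l hLRc hGRc hLP hGP)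
  · intro h2
    have h2' : xs[l + s] = t := by rw [getElem!_pos xs (l + s) (hlx s le_rfl)] at h2; exact h2
    obtain ⟨hLP, hGP⟩ := counts_of_val hxs (hlx s le_rfl) h2'
    exact final (C2 s P hPhyp hsdeg t l hLRc hGRc hLP hGP) hGP
end

section
/- Let P be a real polynomial of degree n with exactly m conjugate pairs of non-real complex roots, and let r be a real root of P of multiplicity d with 0 ≤ d ≤ s. If r is a root of P^(s) of multiplicity g ≥ 1, then g ≤ 2m + 1 and d < s. -/
open Polynomial

noncomputable def nrAux (Q : ℝ[X]) : ℕ :=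
  ((Q.map (algebraMap ℝ ℂ)).roots.filter (fun z => z.im ≠ 0)).card

lemma filter_real_roots (Q : ℝ[X]) :
    ((Q.map (algebraMap ℝ ℂ)).roots.filter (fun z => ¬ z.im ≠ 0)) =
      Q.roots.map (algebraMap ℝ ℂ) := by
  have hinj : Function.Injective (algebraMap ℝ ℂ) := (algebraMap ℝ ℂ).injective
  ext z
  rw [Multiset.count_filter]
  by_cases hz : z.im = 0
  · have hzz : z = algebraMap ℝ ℂ z.re := by
      apply Complex.ext <;> simp [hz]
    rw [if_pos (by simpa using hz), hzz, Multiset.count_map_eq_count' _ _ hinj,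
      count_roots, count_roots, ← eq_rootMultiplicity_map hinj]
  · rw [if_neg (by simpa using hz)]
    symm
    rw [Multiset.count_eq_zero]
    intro hmem
    obtain ⟨x, _, rfl⟩ := Multiset.mem_map.mp hmem
    exact hz (by simp)

lemma natDegree_eq_nr_add (Q : ℝ[X]) :
    Q.natDegree = nrAux Q + Multiset.card Q.roots := by
  have hsplit : Splits (Q.map (algebraMap ℝ ℂ)) := IsAlgClosed.splits _
  have h1 : Q.natDegree = Multiset.card (Q.map (algebraMap ℝ ℂ)).roots :=
    by rw [← natDegree_map (algebraMap ℝ ℂ)]; exact hsplit.natDegree_eq_card_roots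
  have h2 := congrArg Multiset.card
    (Multiset.filter_add_not (fun z => z.im ≠ 0) (Q.map (algebraMap ℝ ℂ)).roots)
  rw [Multiset.card_add, filter_real_roots, Multiset.card_map] at h2
  rw [h1, ← h2]; rfl

lemma natDegree_deriv_succ {Q : ℝ[X]} (h : derivative Q ≠ 0) :
    Q.natDegree = (derivative Q).natDegree + 1 := by
  have hnd : Q.natDegree ≠ 0 := by
    intro h0
    obtain ⟨c, rfl⟩ := Polynomial.natDegree_eq_zero.mp h0
    simp at h
  have hdeg := degree_derivative_eq Q (Nat.pos_of_ne_zero hnd)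
  have h2 : (derivative Q).natDegree = Q.natDegree - 1 :=
    natDegree_eq_of_degree_eq_some hdeg
  omega

lemma nr_derivative_le {Q : ℝ[X]} (h : derivative Q ≠ 0) :
    nrAux (derivative Q) ≤ nrAux Q := by
  have e1 := natDegree_eq_nr_add Q
  have e2 := natDegree_eq_nr_add (derivative Q)
  have e3 := natDegree_deriv_succ h
  have e4 := Q.card_roots_le_derivative
  omega

lemma refined_count (Q : ℝ[X]) (r : ℝ) (h0 : Q.eval r ≠ 0) :
    Multiset.card Q.roots + (derivative Q).rootMultiplicity r ≤
      Multiset.card (derivative Q).roots + 2 := by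
  classical
  rcases eq_or_ne (derivative Q) 0 with hd | hd
  · have hc := eq_C_of_derivative_eq_zero hd
    rw [hd, hc]
    simp
  rcases Nat.eq_zero_or_pos ((derivative Q).rootMultiplicity r) with hM | hM
  · rw [hM]
    have := Q.card_roots_le_derivative
    omega
  have hQ : Q ≠ 0 := by rintro rfl; simp at h0
  set F := Q.roots.toFinset with hF
  set G := (derivative Q).roots.toFinset with hG
  set cnt : ℝ → ℕ := fun x => (derivative Q).roots.count x with hcnt
  have hrG : r ∈ G := by
    rw [hG, Multiset.mem_toFinset, mem_roots hd]
    exact (rootMultiplicity_pos hd).mp hM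
  have hrF : r ∉ F := by
    rw [hF, Multiset.mem_toFinset, mem_roots hQ]
    exact fun hc => h0 hc
  have hrS : r ∈ G \ F := Finset.mem_sdiff.mpr ⟨hrG, hrF⟩
  -- step 1
  have step1 : Multiset.card Q.roots ≤
      (∑ x ∈ F, (derivative Q).rootMultiplicity x) + F.card := by
    rw [← Multiset.toFinset_sum_count_eq, Finset.card_eq_sum_ones, ← Finset.sum_add_distrib]
    refine Finset.sum_le_sum fun x hx => ?_
    have h1 : 1 ≤ Q.roots.count x := Multiset.count_pos.mpr (Multiset.mem_toFinset.mp hx)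
    have h2 := Q.rootMultiplicity_sub_one_le_derivative_rootMultiplicity x
    rw [count_roots] at h1 ⊢
    omega
  -- step 2
  have step2 : F.card ≤ (G \ F).card + 1 :=
    Q.card_roots_toFinset_le_card_roots_derivative_diff_roots_succ
  -- step 3
  have step3 : (G \ F).card + (derivative Q).rootMultiplicity r ≤
      (∑ x ∈ G \ F, cnt x) + 1 := by
    rw [← Finset.add_sum_erase _ cnt hrS]
    have hcr : cnt r = (derivative Q).rootMultiplicity r := count_roots _
    have hcard : ((G \ F).erase r).card + 1 = (G \ F).card :=
      Finset.card_erase_add_one hrS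
    have hsum : ((G \ F).erase r).card ≤ ∑ x ∈ (G \ F).erase r, cnt x := by
      rw [Finset.card_eq_sum_ones]
      refine Finset.sum_le_sum fun x hx => ?_
      have hxG : x ∈ G := (Finset.mem_sdiff.mp (Finset.mem_of_mem_erase hx)).1
      exact Multiset.count_pos.mpr (Multiset.mem_toFinset.mp hxG)
    omega
  -- step 4
  have h4a : ∑ x ∈ F, (derivative Q).rootMultiplicity x = ∑ x ∈ F ∩ G, cnt x := by
    have e1 : ∑ x ∈ F ∩ G, cnt x = ∑ x ∈ F, cnt x := by
      apply Finset.sum_subset Finset.inter_subset_left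
      intro x hxF hxn
      have hxG : x ∉ G := fun hxG => hxn (Finset.mem_inter.mpr ⟨hxF, hxG⟩)
      rw [hcnt]
      simp only
      rw [Multiset.count_eq_zero]
      exact fun hc => hxG (Multiset.mem_toFinset.mpr hc)
    rw [e1]
    exact Finset.sum_congr rfl fun x _ => (count_roots _).symm
  have hdisj : Disjoint (F ∩ G) (G \ F) := by
    refine Finset.disjoint_left.mpr fun x hx hx' => ?_
    exact (Finset.mem_sdiff.mp hx').2 (Finset.mem_inter.mp hx).1
  have step4 : (∑ x ∈ F ∩ G, cnt x) + (∑ x ∈ G \ F, cnt x) ≤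
      Multiset.card (derivative Q).roots := by
    rw [← Finset.sum_union hdisj, ← Multiset.toFinset_sum_count_eq]
    refine Finset.sum_le_sum_of_subset ?_
    intro x hx
    rcases Finset.mem_union.mp hx with h | h
    · exact (Finset.mem_inter.mp h).2
    · exact (Finset.mem_sdiff.mp h).1
  omega

lemma key_bound (Q : ℝ[X]) (r : ℝ) (h0 : Q.eval r ≠ 0) (hd : derivative Q ≠ 0) :
    (derivative Q).rootMultiplicity r ≤ nrAux Q + 1 := by
  have e1 := natDegree_eq_nr_add Q
  have e2 := natDegree_eq_nr_add (derivative Q)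
  have e3 := natDegree_deriv_succ hd
  have e4 := refined_count Q r h0
  omega

lemma iter_deriv_ne_zero {P : ℝ[X]} {k l : ℕ} (h : derivative^[l] P ≠ 0) (hkl : k ≤ l) :
    derivative^[k] P ≠ 0 := by
  intro h0
  apply h
  rw [← Nat.sub_add_cancel hkl, Function.iterate_add_apply, h0]
  exact Function.iterate_fixed derivative_zero _

lemma nr_iter_le (P : ℝ[X]) (k : ℕ) (h : derivative^[k] P ≠ 0) :
    nrAux (derivative^[k] P) ≤ nrAux P := by
  induction k with
  | zero => simp
  | succ k ih =>
    rw [Function.iterate_succ_apply'] at h ⊢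
    exact le_trans (nr_derivative_le h) (ih (fun h0 => h (by rw [h0]; simp)))

lemma mult_iter {P : ℝ[X]} (r : ℝ) :
    ∀ k, k ≤ P.rootMultiplicity r →
      (derivative^[k] P).rootMultiplicity r = P.rootMultiplicity r - k := by
  intro k
  induction k with
  | zero => simp
  | succ k ih =>
    intro hk
    have hik := ih (le_trans (Nat.le_succ k) hk)
    have hpos : 0 < (derivative^[k] P).rootMultiplicity r := by omega
    have hne : derivative^[k] P ≠ 0 := by
      intro h0; rw [h0, rootMultiplicity_zero] at hpos; omega
    have hroot : (derivative^[k] P).IsRoot r := (rootMultiplicity_pos hne).mp hpos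
    rw [Function.iterate_succ_apply', derivative_rootMultiplicity_of_root hroot, hik]
    omega

lemma main_aux (r : ℝ) :
    ∀ (s : ℕ) (P : ℝ[X]), P ≠ 0 → P.rootMultiplicity r ≤ s →
      1 ≤ (derivative^[s] P).rootMultiplicity r →
      (derivative^[s] P).rootMultiplicity r ≤ nrAux P + 1 ∧ P.rootMultiplicity r < s := by
  intro s
  induction s with
  | zero =>
    intro P hP hds hg
    simp only [Function.iterate_zero_apply] at hg
    omega
  | succ s ih =>
    intro P hP hds hg
    rw [Function.iterate_succ_apply'] at hg
    set Q := derivative^[s] P with hQdef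
    have hQd : derivative Q ≠ 0 := by
      intro h0; rw [h0, rootMultiplicity_zero] at hg; omega
    have hQ : Q ≠ 0 := fun h0 => hQd (by rw [h0]; simp)
    -- first: d ≤ s
    have hdle : P.rootMultiplicity r ≤ s := by
      rcases Nat.lt_or_ge (P.rootMultiplicity r) (s+1) with h | h
      · omega
      · exfalso
        have heq : P.rootMultiplicity r = s + 1 := le_antisymm hds h
        have h1 : Q.rootMultiplicity r = 1 := by
          rw [hQdef, mult_iter r s (by omega), heq]; omega
        have hroot : Q.IsRoot r := (rootMultiplicity_pos hQ).mp (by omega)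
        rw [derivative_rootMultiplicity_of_root hroot, h1] at hg
        omega
    refine ⟨?_, by omega⟩
    rcases Nat.eq_zero_or_pos (Q.rootMultiplicity r) with he | he
    · -- r is not a root of Q
      have h0 : Q.eval r ≠ 0 := by
        intro hc
        have := (rootMultiplicity_pos hQ).mpr hc
        omega
      rw [Function.iterate_succ_apply']
      calc (derivative Q).rootMultiplicity r ≤ nrAux Q + 1 := key_bound Q r h0 hQd
        _ ≤ nrAux P + 1 := by
            have h5 : nrAux Q ≤ nrAux P := nr_iter_le P s hQ
            omega
    · have hroot : Q.IsRoot r := (rootMultiplicity_pos hQ).mp he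
      have h6 := ih P hP hdle he
      rw [← hQdef] at h6
      rw [Function.iterate_succ_apply', derivative_rootMultiplicity_of_root hroot]
      omega

theorem mult_bound_at_low_order_root
    (P : ℝ[X]) (n m s d g : ℕ) (r : ℝ) (hP : P ≠ 0) (hdeg : P.natDegree = n)
    (hnonreal : ((P.map (algebraMap ℝ ℂ)).roots.filter (fun z => z.im ≠ 0)).card = 2 * m)
    (hd : P.rootMultiplicity r = d) (hds : d ≤ s)
    (hg : (derivative^[s] P).rootMultiplicity r = g) (hg1 : 1 ≤ g) :
    g ≤ 2 * m + 1 ∧ d < s := by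
  have hnr : nrAux P = 2 * m := hnonreal
  have := main_aux r s P hP (by omega) (by omega)
  omega
end

section
/- All complex roots of the derivative P' of a nonconstant complex polynomial P lie in the convex hull of the set of roots of P (Gauss–Lucas theorem). In particular, if all roots of a real polynomial P have imaginary part of absolute value at most T, then the same holds for all roots of P^(s). -/
open Polynomial

lemma gaussLucasAux (P : ℂ[X]) (hP : 0 < P.degree) :
    ∀ z ∈ (derivative P).roots, z ∈ convexHull ℝ {w : ℂ | P.IsRoot w} := by
  intro z hz
  have hP0 : P ≠ 0 := fun h => by simp [h] at hP
  by_cases hPz : P.IsRoot z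
  · exact subset_convexHull ℝ _ hPz
  obtain ⟨hd0, hdz⟩ := mem_roots'.mp hz
  have hsplits : Splits P := IsAlgClosed.splits P
  have hfac := hsplits.eq_prod_roots
  set t := P.roots with ht
  set Q : ℂ[X] := (t.map fun r => X - C r).prod with hQ
  have ha : P.leadingCoeff ≠ 0 := leadingCoeff_ne_zero.mpr hP0
  have hevalP : P.eval z ≠ 0 := hPz
  have hQz : Q.eval z ≠ 0 := by
    intro h
    apply hevalP
    rw [hfac]
    simp [h]
  have hQzval : Q.eval z = (t.map fun r => z - r).prod := by
    rw [hQ, eval_multiset_prod, Multiset.map_map]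
    simp
  have hzr : ∀ r ∈ t, z - r ≠ 0 := by
    intro r hr h
    apply hQz
    rw [hQzval]
    exact Multiset.prod_eq_zero (Multiset.mem_map.mpr ⟨r, hr, h⟩)
  have hder : (derivative P).eval z = 0 := hdz
  have hQder : (derivative Q).eval z = 0 := by
    have hdP : derivative P = C P.leadingCoeff * derivative Q := by
      conv_lhs => rw [hfac]
      rw [derivative_C_mul]
    rw [hdP] at hder
    simpa [ha] using hder
  have hderQ : derivative Q = (t.map fun r =>
      ((t.erase r).map fun r' => X - C r').prod * derivative (X - C r)).sum := by
    rw [hQ]; exact derivative_prod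
  have hsum0 : (t.map fun r => ((t.erase r).map fun r' => z - r').prod).sum = 0 := by
    have h : (evalRingHom z) (derivative Q) = 0 := hQder
    rw [hderQ, map_multiset_sum, Multiset.map_map] at h
    rw [← h]
    apply congrArg Multiset.sum
    apply Multiset.map_congr rfl
    intro r hr
    simp [Function.comp, coe_evalRingHom, eval_multiset_prod, Multiset.map_map]
  have hterm : ∀ r ∈ t, ((t.erase r).map fun r' => z - r').prod
      = Q.eval z * (z - r)⁻¹ := by
    intro r hr
    have h1 : (z - r) * ((t.erase r).map fun r' => z - r').prod = Q.eval z := by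
      rw [hQzval]
      exact Multiset.prod_map_erase (f := fun r' => z - r') hr
    rw [← h1, mul_comm (z - r), mul_assoc, mul_inv_cancel₀ (hzr r hr), mul_one]
  have hsuminv : (t.map fun r => (z - r)⁻¹).sum = 0 := by
    have h2 : (t.map fun r => Q.eval z * (z - r)⁻¹).sum = 0 := by
      rw [← hsum0]
      exact congrArg Multiset.sum (Multiset.map_congr rfl hterm).symm
    rw [Multiset.sum_map_mul_left] at h2
    rcases mul_eq_zero.mp h2 with h | h
    · exact absurd h hQz
    · exact h
  set w : ℂ → ℝ := fun r => (Complex.normSq (z - r))⁻¹ with hw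
  have hconj : (t.map fun r => (w r : ℂ) * (z - r)).sum = 0 := by
    have h := congrArg (starRingEnd ℂ) hsuminv
    rw [map_multiset_sum, Multiset.map_map, map_zero] at h
    rw [← h]
    apply congrArg Multiset.sum
    apply Multiset.map_congr rfl
    intro r hr
    simp only [Function.comp_apply, map_inv₀, Complex.inv_def, map_mul, Complex.normSq_conj,
      Complex.conj_conj, Complex.conj_ofReal, hw]
    push_cast
    ring
  classical
  set s : Finset ℂ := t.toFinset with hs
  set W : ℂ → ℝ := fun r => (t.count r : ℝ) * w r with hW
  have hEq : (∑ r ∈ s, (W r : ℂ) * (z - r)) = 0 := by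
    rw [← hconj, Finset.sum_multiset_map_count]
    apply Finset.sum_congr rfl
    intro r _
    rw [nsmul_eq_mul, hW]
    push_cast
    ring
  have hWnn : ∀ r ∈ s, 0 ≤ W r := fun r _ =>
    mul_nonneg (Nat.cast_nonneg _) (inv_nonneg.mpr (Complex.normSq_nonneg _))
  have htne : t ≠ 0 := by
    intro h
    have hcard : Multiset.card t = P.natDegree := splits_iff_card_roots.mp hsplits
    have hnd : 0 < P.natDegree := natDegree_pos_iff_degree_pos.mpr hP
    rw [← hcard, h] at hnd
    simp at hnd
  obtain ⟨r0, hr0⟩ := Multiset.exists_mem_of_ne_zero htne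
  have hWpos : 0 < ∑ r ∈ s, W r := by
    apply Finset.sum_pos' hWnn
    refine ⟨r0, Multiset.mem_toFinset.mpr hr0, mul_pos ?_ ?_⟩
    · exact_mod_cast Multiset.count_pos.mpr hr0
    · exact inv_pos.mpr (Complex.normSq_pos.mpr (hzr r0 hr0))
  have hsumWC : (∑ r ∈ s, W r) • z = ∑ r ∈ s, W r • z := by
    rw [Finset.sum_smul]
  have hkey : ∑ r ∈ s, W r • (id r) = (∑ r ∈ s, W r) • z := by
    have h3 : (∑ r ∈ s, ((W r : ℂ) * z - (W r : ℂ) * r)) = 0 := by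
      rw [← hEq]
      apply Finset.sum_congr rfl
      intro r _
      ring
    rw [Finset.sum_sub_distrib, sub_eq_zero] at h3
    simp only [id_eq, Complex.real_smul]
    push_cast
    rw [← h3, Finset.sum_mul]
  have hmem := Finset.centerMass_mem_convexHull s hWnn hWpos
    (z := id) (s := {w : ℂ | P.IsRoot w}) ?_
  · have hcm : s.centerMass W id = z := by
      rw [Finset.centerMass, hkey, inv_smul_smul₀ (ne_of_gt hWpos)]
    rwa [hcm] at hmem
  · intro i hi
    exact (mem_roots'.mp (Multiset.mem_toFinset.mp hi)).2

theorem gauss_lucas_and_imaginary_part_bound :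
    (∀ P : ℂ[X], 0 < P.degree →
      ∀ z ∈ (derivative P).roots, z ∈ convexHull ℝ {w : ℂ | P.IsRoot w}) ∧
    (∀ (P : ℝ[X]) (s : ℕ) (T : ℝ), P ≠ 0 → 0 ≤ T →
      (∀ z ∈ (P.map (algebraMap ℝ ℂ)).roots, |z.im| ≤ T) →
      ∀ z ∈ ((derivative^[s] P).map (algebraMap ℝ ℂ)).roots, |z.im| ≤ T) := by
  constructor
  · exact gaussLucasAux
  · intro P s T hP hT h0
    have hconv : Convex ℝ {z : ℂ | |z.im| ≤ T} := by
      have : {z : ℂ | |z.im| ≤ T} = Complex.imLm ⁻¹' (Set.Icc (-T) T) := by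
        ext z
        simp [abs_le]
      rw [this]
      exact (convex_Icc (-T) T).linear_preimage Complex.imLm
    induction s with
    | zero => exact h0
    | succ n ih =>
      intro z hz
      set Q : ℂ[X] := (derivative^[n] P).map (algebraMap ℝ ℂ) with hQ
      have hzQ : z ∈ (derivative Q).roots := by
        have heq : ((derivative^[n + 1] P).map (algebraMap ℝ ℂ)) = derivative Q := by
          rw [hQ, derivative_map, Function.iterate_succ_apply' derivative n P]
        rw [← heq]
        exact hz
      have hdQ : derivative Q ≠ 0 := (mem_roots'.mp hzQ).1
      have hQdeg : 0 < Q.degree := by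
        by_contra h
        push_neg at h
        have : Q = C (Q.coeff 0) := eq_C_of_degree_le_zero h
        apply hdQ
        rw [this, derivative_C]
      have hQ0 : Q ≠ 0 := fun h => by simp [h] at hQdeg
      have hGL := gaussLucasAux Q hQdeg z hzQ
      have hsub : {w : ℂ | Q.IsRoot w} ⊆ {z : ℂ | |z.im| ≤ T} := by
        intro w hw
        exact ih w (mem_roots'.mpr ⟨hQ0, hw⟩)
      exact convexHull_min hsub hconv hGL
end

section
/- Let μ ≥ 0 and ν ≥ 1 be integers and let Q₂(x, a) be a polynomial in x of degree ≤ ν - 1 with coefficients depending continuously on a and with Q₂(0, a) = 0 for all a. Then for all sufficiently small a > 0, the polynomial Q₁(x) = x^μ (x^ν + a + a·Q₂(x, a)) has a real root of multiplicity exactly μ at 0, and if ν is even all its remaining ν roots are non-real. -/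
open Polynomial

private lemma key_pos (ν : ℕ) (hν : 1 ≤ ν) (hev : Even ν) (Q : ℝ[X]) (hdeg : Q.natDegree < ν)
    (h0 : Q.coeff 0 = 0) (M : ℝ) (hM : 1 ≤ M) (hb : ∀ k, |Q.coeff k| ≤ M)
    (a : ℝ) (ha : 0 < a)
    (haε : a < (min 1 (1/(2*M*ν)))^ν / (2*M*ν)) (x : ℝ) :
    0 < x^ν + a + a * Q.eval x := by
  set δ : ℝ := min 1 (1/(2*M*ν)) with hδdef
  have hMν : (0:ℝ) < 2*M*ν := by positivity
  have hδ0 : 0 < δ := lt_min one_pos (by positivity)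
  have hδ1 : δ ≤ 1 := min_le_left _ _
  have heval : Q.eval x = ∑ k ∈ Finset.range ν, Q.coeff k * x ^ k :=
    eval_eq_sum_range' hdeg x
  have hxν : 0 ≤ x ^ ν := hev.pow_nonneg x
  rcases le_or_gt |x| δ with hx | hx
  · -- small x : |Q.eval x| ≤ M * ν * δ ≤ 1/2
    have hS : |Q.eval x| ≤ M * ν * δ := by
      rw [heval]
      calc |∑ k ∈ Finset.range ν, Q.coeff k * x ^ k|
          ≤ ∑ k ∈ Finset.range ν, |Q.coeff k * x ^ k| := Finset.abs_sum_le_sum_abs _ _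
        _ ≤ ∑ k ∈ Finset.range ν, M * δ := by
            refine Finset.sum_le_sum fun k hk => ?_
            rcases Nat.eq_zero_or_pos k with rfl | hk1
            · simp [h0]; positivity
            · rw [abs_mul, abs_pow]
              have h1 : |x| ^ k ≤ δ := by
                calc |x| ^ k ≤ |x| ^ 1 :=
                      pow_le_pow_of_le_one (abs_nonneg x) (hx.trans hδ1) hk1
                  _ = |x| := pow_one _
                  _ ≤ δ := hx
              exact mul_le_mul (hb k) h1 (by positivity) (by linarith)
        _ = M * ν * δ := by rw [Finset.sum_const, Finset.card_range]; ring
    have hhalf : M * ν * δ ≤ 1/2 := by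
      have : δ ≤ 1/(2*M*ν) := min_le_right _ _
      calc M * ν * δ ≤ M * ν * (1/(2*M*ν)) := by
            apply mul_le_mul_of_nonneg_left this; positivity
        _ = 1/2 := by field_simp
    have : -(1/2 : ℝ) ≤ Q.eval x := by
      have := (abs_le.mp (hS.trans hhalf)).1; linarith
    nlinarith
  · -- large x: |Q.eval x| ≤ M * ν * x^ν / δ^ν
    have hδν : (0:ℝ) < δ ^ ν := by positivity
    have htν : δ ^ ν ≤ |x| ^ ν := pow_le_pow_left₀ hδ0.le hx.le ν
    have hxeq : x ^ ν = |x| ^ ν := (hev.pow_abs x).symm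
    have hkey : ∀ k ∈ Finset.range ν, |x| ^ k * δ ^ ν ≤ |x| ^ ν := by
      intro k hk
      have hk' : k ≤ ν := (Finset.mem_range.mp hk).le
      calc |x| ^ k * δ ^ ν ≤ |x| ^ k * (δ ^ (ν - k) * 1) := by
            rw [mul_one]
            apply mul_le_mul_of_nonneg_left _ (by positivity)
            calc δ ^ ν = δ ^ (ν - k) * δ ^ k := by rw [← pow_add]; congr 1; omega
              _ ≤ δ ^ (ν - k) * 1 := by
                  apply mul_le_mul_of_nonneg_left (pow_le_one₀ hδ0.le hδ1) (by positivity)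
              _ = δ ^ (ν - k) := mul_one _
        _ = |x| ^ k * δ ^ (ν - k) := by ring
        _ ≤ |x| ^ k * |x| ^ (ν - k) := by
            apply mul_le_mul_of_nonneg_left (pow_le_pow_left₀ hδ0.le hx.le _) (by positivity)
        _ = |x| ^ ν := by rw [← pow_add]; congr 1; omega
    have hS : |Q.eval x| * δ ^ ν ≤ M * ν * |x| ^ ν := by
      rw [heval]
      calc |∑ k ∈ Finset.range ν, Q.coeff k * x ^ k| * δ ^ ν
          ≤ (∑ k ∈ Finset.range ν, |Q.coeff k * x ^ k|) * δ ^ ν := by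
            apply mul_le_mul_of_nonneg_right (Finset.abs_sum_le_sum_abs _ _) hδν.le
        _ = ∑ k ∈ Finset.range ν, |Q.coeff k * x ^ k| * δ ^ ν := Finset.sum_mul _ _ _
        _ ≤ ∑ k ∈ Finset.range ν, M * |x| ^ ν := by
            refine Finset.sum_le_sum fun k hk => ?_
            rw [abs_mul, abs_pow]
            calc |Q.coeff k| * |x| ^ k * δ ^ ν = |Q.coeff k| * (|x| ^ k * δ ^ ν) := by ring
              _ ≤ M * |x| ^ ν :=
                  mul_le_mul (hb k) (hkey k hk) (by positivity) (by linarith)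
        _ = M * ν * |x| ^ ν := by rw [Finset.sum_const, Finset.card_range]; ring
    -- a * |Q.eval x| ≤ a * M * ν * x^ν/δ^ν < x^ν / 2 ... roughly
    have h1 : a * (M * ν) * |x| ^ ν < (δ ^ ν / (2*M*ν)) * (M*ν) * |x|^ν := by
      have hx0 : 0 < |x| ^ ν := lt_of_lt_of_le hδν htν
      have hMν' : (0:ℝ) < M * ν := by positivity
      have := mul_lt_mul_of_pos_right (mul_lt_mul_of_pos_right haε hMν') hx0
      linarith
    have h2 : (δ ^ ν / (2*M*ν)) * (M*ν) = δ ^ ν / 2 := by field_simp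
    have h3 : a * |Q.eval x| * δ ^ ν ≤ a * (M * ν * |x| ^ ν) := by
      calc a * |Q.eval x| * δ ^ ν = a * (|Q.eval x| * δ ^ ν) := by ring
        _ ≤ a * (M * ν * |x| ^ ν) := by
            apply mul_le_mul_of_nonneg_left hS ha.le
    have h4 : a * Q.eval x ≥ -(a * |Q.eval x|) := by
      have := neg_abs_le (Q.eval x); nlinarith [abs_nonneg (Q.eval x)]
    -- goal: 0 < x^ν + a + a*Q.eval x
    -- from h3, h1, h2: a*|Q| * δ^ν < δ^ν/2 * |x|^ν, so a*|Q| < |x|^ν/2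
    have h5 : a * |Q.eval x| < |x| ^ ν / 2 := by
      have : a * |Q.eval x| * δ ^ ν < δ ^ ν / 2 * |x| ^ ν := by nlinarith
      nlinarith
    rw [hxeq]
    nlinarith [lt_of_lt_of_le hδν htν]

theorem small_perturbation_keeps_complex_roots
    (μ ν : ℕ) (hν : 1 ≤ ν) (Q₂ : ℝ → ℝ[X])
    (hdeg : ∀ a, (Q₂ a).natDegree ≤ ν - 1)
    (hcont : ∀ k, Continuous fun a => (Q₂ a).coeff k)
    (hzero : ∀ a, (Q₂ a).eval 0 = 0) :
    ∃ ε > 0, ∀ a : ℝ, 0 < a → a < ε →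
      (X ^ μ * (X ^ ν + C a + C a * Q₂ a) : ℝ[X]).rootMultiplicity 0 = μ ∧
      (Even ν →
        (((X ^ μ * (X ^ ν + C a + C a * Q₂ a) : ℝ[X]).map (algebraMap ℝ ℂ)).roots.filter
            (fun z => z.im ≠ 0)).card = ν) := by
  have hdeg' : ∀ a, (Q₂ a).natDegree < ν := fun a => by have := hdeg a; omega
  have hc0 : ∀ a, (Q₂ a).coeff 0 = 0 := fun a => by
    rw [Polynomial.coeff_zero_eq_eval_zero]; exact hzero a
  set g : ℝ → ℝ := fun a => ∑ k ∈ Finset.range ν, |(Q₂ a).coeff k| with hgdef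
  have gcont : Continuous g := continuous_finset_sum _ fun k _ => (hcont k).abs
  have hg0 : 0 ≤ g 0 := Finset.sum_nonneg fun k _ => abs_nonneg _
  set M : ℝ := g 0 + 1 with hMdef
  have hM1 : 1 ≤ M := by linarith
  obtain ⟨ε₀, hε₀pos, hε₀⟩ : ∃ ε₀ > 0, ∀ a : ℝ, |a| < ε₀ → g a < M := by
    obtain ⟨d, hd, hdd⟩ := Metric.continuousAt_iff.mp gcont.continuousAt 1 one_pos
    refine ⟨d, hd, fun a ha => ?_⟩
    have h := hdd (show dist a 0 < d by simpa [Real.dist_eq] using ha)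
    rw [Real.dist_eq] at h
    have := (abs_lt.mp h).2
    linarith
  -- coefficient bound
  have hb : ∀ a : ℝ, |a| < ε₀ → ∀ k, |(Q₂ a).coeff k| ≤ M := by
    intro a ha k
    rcases lt_or_ge k ν with hk | hk
    · refine le_trans ?_ (hε₀ a ha).le
      exact Finset.single_le_sum (f := fun k => |(Q₂ a).coeff k|)
        (fun i _ => abs_nonneg _) (Finset.mem_range.mpr hk)
    · rw [coeff_eq_zero_of_natDegree_lt (lt_of_lt_of_le (hdeg' a) hk)]
      simp; linarith
  set δ : ℝ := min 1 (1/(2*M*ν)) with hδdef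
  have hMν : (0:ℝ) < 2*M*ν := by positivity
  have hδ0 : 0 < δ := lt_min one_pos (by positivity)
  refine ⟨min ε₀ (δ^ν / (2*M*ν)), lt_min hε₀pos (by positivity), fun a ha haε => ?_⟩
  have haε₀ : |a| < ε₀ := by
    rw [abs_of_pos ha]; exact lt_of_lt_of_le haε (min_le_left _ _)
  set P : ℝ[X] := X ^ ν + C a + C a * Q₂ a with hPdef
  have hPeval : ∀ x : ℝ, P.eval x = x ^ ν + a + a * (Q₂ a).eval x := by
    intro x; simp [hPdef]
  have hP0 : P.eval 0 = a := by
    rw [hPeval, hzero a, zero_pow (by omega)]; ring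
  have hPne : P ≠ 0 := fun h => by simp [h] at hP0; exact absurd hP0.symm ha.ne'
  constructor
  · -- root multiplicity
    rw [rootMultiplicity_mul (mul_ne_zero (pow_ne_zero μ X_ne_zero) hPne)]
    have h1 : rootMultiplicity 0 ((X : ℝ[X]) ^ μ) = μ := by
      have := rootMultiplicity_X_sub_C_pow (R := ℝ) 0 μ
      simpa using this
    have h2 : rootMultiplicity 0 P = 0 := by
      apply rootMultiplicity_eq_zero
      rw [IsRoot, hP0]; exact ha.ne'
    rw [h1, h2]
    omega
  · -- complex roots
    intro hev
    have hpos : ∀ x : ℝ, 0 < P.eval x := by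
      intro x
      rw [hPeval]
      exact key_pos ν hν hev (Q₂ a) (hdeg' a) (hc0 a) M hM1 (hb a haε₀) a ha
        (lt_of_lt_of_le haε (min_le_right _ _)) x
    -- degree of P
    have hd1 : (C a + C a * Q₂ a).natDegree < ν := by
      apply lt_of_le_of_lt (natDegree_add_le _ _)
      apply max_lt (by simp; omega)
      apply lt_of_le_of_lt (natDegree_mul_le)
      simp only [natDegree_C, zero_add]
      exact hdeg' a
    have hdlt : (C a + C a * Q₂ a).degree < ((X : ℝ[X]) ^ ν).degree := by
      rw [degree_X_pow]
      calc (C a + C a * Q₂ a).degree ≤ ((C a + C a * Q₂ a).natDegree : WithBot ℕ) :=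
            degree_le_natDegree
        _ < (ν : WithBot ℕ) := by exact_mod_cast hd1
    have hPeq : P = X ^ ν + (C a + C a * Q₂ a) := by rw [hPdef]; ring
    have hmonic : P.Monic := by
      rw [hPeq]; exact (monic_X_pow ν).add_of_left hdlt
    have hndeg : P.natDegree = ν := by
      have : P.degree = ((X : ℝ[X]) ^ ν).degree := by
        rw [hPeq]; exact degree_add_eq_left_of_degree_lt hdlt
      rw [degree_X_pow] at this
      exact natDegree_eq_of_degree_eq_some this
    set f := algebraMap ℝ ℂ
    have hmapP : (P.map f) ≠ 0 := (Polynomial.map_ne_zero_iff f.injective).mpr hPne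
    have hXm : ((X:ℝ[X]) ^ μ).map f = (X:ℂ[X]) ^ μ := by
      rw [Polynomial.map_pow, Polynomial.map_X]
    have hroots : ((X ^ μ * P).map f).roots
        = ((X:ℂ[X]) ^ μ).roots + (P.map f).roots := by
      rw [Polynomial.map_mul, hXm, roots_mul (mul_ne_zero (pow_ne_zero μ X_ne_zero) hmapP)]
    have hrootsX : ((X:ℂ[X]) ^ μ).roots = μ • ({0} : Multiset ℂ) := by
      rw [roots_pow, roots_X]
    have hcard : Multiset.card ((P.map f).roots) = ν := by
      rw [← (IsAlgClosed.splits (P.map f)).natDegree_eq_card_roots, natDegree_map, hndeg]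
    have hallim : ∀ z ∈ (P.map f).roots, z.im ≠ 0 := by
      intro z hz him
      have hzre : z = (f z.re) := by
        apply Complex.ext <;> simp [f, him]
      have hzeval : (P.map f).eval z = 0 := by
        have := isRoot_of_mem_roots hz; exact this
      rw [hzre, eval_map, eval₂_at_apply] at hzeval
      have : P.eval z.re = 0 := by
        have : ((P.eval z.re : ℝ) : ℂ) = 0 := hzeval
        exact_mod_cast this
      exact absurd this (hpos z.re).ne'
    rw [hroots, Multiset.filter_add, hrootsX]
    have hfilt0 : Multiset.filter (fun z => z.im ≠ 0) (μ • ({0} : Multiset ℂ)) = 0 := by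
      rw [Multiset.filter_eq_nil]
      intro z hz
      have : z = 0 := by
        have := Multiset.mem_of_mem_nsmul hz; simpa using this
      simp [this]
    rw [hfilt0, Multiset.filter_eq_self.mpr hallim]
    simpa using hcard
end
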